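/- Let Σ̂ be a p×p real symmetric positive definite matrix with D = Σ̂⁻¹, let μ > 0, and let L, S be p×p real symmetric matrices with L + S positive definite and Y = (L+S)⁻¹. Let i ≠ j be indices, set Δ = Y_{ii}·Y_{jj} − Y_{ij}², and let δ ∈ ℝ with q(δ) := −Δ·δ² + 2·Y_{ij}·δ + 1 > 0. Then f(L, S + δ·(e_i e_jᵀ + e_j e_iᵀ)) − f(L, S) = μ·(−log q(δ) + 2·δ·D_{ij}). -/

import Mathlib

open Matrix

/-- The smooth part of the factor-analysis objective. -/
noncomputable def faObj {p : ℕ} (μ : ℝ) (SigHat L S : Matrix (Fin p) (Fin p) ℝ) : ℝ :=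
  L.trace + μ * (((L + S) * SigHat⁻¹).trace - Real.log ((L + S).det))

theorem trace_stdBasis_mul {p : ℕ} (i j : Fin p) (c : ℝ) (M : Matrix (Fin p) (Fin p) ℝ) :
    (Matrix.single i j c * M).trace = c * M j i := by
  simp [Matrix.trace, Matrix.diag, Matrix.mul_apply, Matrix.single,
    Finset.sum_ite_eq, ite_and]

theorem isSymm_inv {p : ℕ} (A : Matrix (Fin p) (Fin p) ℝ) (hAs : A.IsSymm) : A⁻¹.IsSymm := by
  unfold Matrix.IsSymm
  rw [Matrix.transpose_nonsing_inv, hAs]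

theorem det_offdiag_update {p : ℕ} (A : Matrix (Fin p) (Fin p) ℝ) (hA : A.PosDef)
    (hAs : A.IsSymm) (i j : Fin p) (δ : ℝ) :
    (A + Matrix.single i j δ + Matrix.single j i δ).det =
      A.det * (-(A⁻¹ i i * A⁻¹ j j - (A⁻¹ i j) ^ 2) * δ ^ 2 + 2 * A⁻¹ i j * δ + 1) := by
  have hdet : IsUnit A.det := isUnit_iff_ne_zero.mpr hA.det_pos.ne'
  have hAinv : A * A⁻¹ = 1 := Matrix.mul_nonsing_inv A hdet
  set E := Matrix.single i j δ + Matrix.single j i δ with hE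
  set U : Matrix (Fin p) (Fin 2) ℝ :=
    Matrix.of fun k t => if t = 0 then δ * A⁻¹ k i else δ * A⁻¹ k j with hU
  set V : Matrix (Fin 2) (Fin p) ℝ :=
    Matrix.of fun t k => if t = 0 then (if j = k then (1:ℝ) else 0)
      else (if i = k then (1:ℝ) else 0) with hV
  have key : A + E = A * (1 + A⁻¹ * E) := by
    rw [Matrix.mul_add, Matrix.mul_one, ← Matrix.mul_assoc, hAinv, Matrix.one_mul]
  have hUV : A⁻¹ * E = U * V := by
    ext k l
    simp only [hE, hU, hV, Matrix.mul_apply, Matrix.add_apply, Matrix.single,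
      Matrix.of_apply, Fin.sum_univ_two, mul_ite, mul_one, mul_zero, ite_and]
    simp [mul_add, Finset.sum_add_distrib, mul_ite, mul_zero, Finset.sum_ite_eq]
    split_ifs <;> ring
  have hVU : det (1 + V * U) =
      -(A⁻¹ i i * A⁻¹ j j - (A⁻¹ i j) ^ 2) * δ ^ 2 + 2 * A⁻¹ i j * δ + 1 := by
    have hji : A⁻¹ j i = A⁻¹ i j := (isSymm_inv A hAs).apply i j
    rw [Matrix.det_fin_two]
    simp only [hU, hV, Matrix.add_apply, Matrix.mul_apply, Matrix.of_apply, Matrix.one_apply,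
      Fin.sum_univ_two]
    simp [Finset.sum_ite_eq, hji]
    ring
  rw [hE] at key
  rw [← add_assoc] at key
  rw [key, Matrix.det_mul, hUV, Matrix.det_one_add_mul_comm, hVU]

/-- Change of the smooth objective under a symmetric off-diagonal update of `S`:
with `Y = (L+S)⁻¹`, `Δ = Yᵢᵢ Yⱼⱼ − Yᵢⱼ²`, `D = Σ̂⁻¹`, `i ≠ j` and
`q(δ) = −Δ δ² + 2 Yᵢⱼ δ + 1 > 0`,
`f(L, S + δ(eᵢeⱼᵀ + eⱼeᵢᵀ)) − f(L,S) = μ(−log q(δ) + 2 δ Dᵢⱼ)`. -/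
theorem faObj_diff_offdiag_update {p : ℕ}
    (SigHat : Matrix (Fin p) (Fin p) ℝ) (hSig : SigHat.PosDef)
    (μ : ℝ) (hμ : 0 < μ)
    (L S : Matrix (Fin p) (Fin p) ℝ) (hL : L.IsSymm) (hS : S.IsSymm)
    (hLS : (L + S).PosDef) (i j : Fin p) (hij : i ≠ j) (δ : ℝ)
    (hq : 0 < -((L + S)⁻¹ i i * (L + S)⁻¹ j j - ((L + S)⁻¹ i j) ^ 2) * δ ^ 2 +
            2 * (L + S)⁻¹ i j * δ + 1) :
    faObj μ SigHat L (S + Matrix.single i j δ + Matrix.single j i δ) -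
        faObj μ SigHat L S =
      μ * (-Real.log (-((L + S)⁻¹ i i * (L + S)⁻¹ j j - ((L + S)⁻¹ i j) ^ 2) * δ ^ 2 +
              2 * (L + S)⁻¹ i j * δ + 1) +
            2 * δ * SigHat⁻¹ i j) := by
  have hAs : (L + S).IsSymm := hL.add hS
  have hSigS : SigHat.IsSymm := by
    have h := hSig.1
    rwa [Matrix.IsHermitian, Matrix.conjTranspose_eq_transpose_of_trivial] at h
  have hDji : SigHat⁻¹ j i = SigHat⁻¹ i j := (isSymm_inv SigHat hSigS).apply i j
  set q : ℝ := -((L + S)⁻¹ i i * (L + S)⁻¹ j j - ((L + S)⁻¹ i j) ^ 2) * δ ^ 2 +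
      2 * (L + S)⁻¹ i j * δ + 1 with hqdef
  have hrw : L + (S + Matrix.single i j δ + Matrix.single j i δ) =
      (L + S) + Matrix.single i j δ + Matrix.single j i δ := by
    abel
  have hdet : ((L + S) + Matrix.single i j δ + Matrix.single j i δ).det =
      (L + S).det * q := det_offdiag_update (L + S) hLS hAs i j δ
  have hlog : Real.log (((L + S) + Matrix.single i j δ +
        Matrix.single j i δ).det) = Real.log ((L + S).det) + Real.log q := by
    rw [hdet, Real.log_mul hLS.det_pos.ne' hq.ne']
  have htr : (((L + S) + Matrix.single i j δ + Matrix.single j i δ) *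
        SigHat⁻¹).trace = ((L + S) * SigHat⁻¹).trace + 2 * δ * SigHat⁻¹ i j := by
    rw [Matrix.add_mul, Matrix.add_mul, Matrix.trace_add, Matrix.trace_add,
      trace_stdBasis_mul, trace_stdBasis_mul, hDji]
    ring
  simp only [faObj, hrw, hlog, htr]
  ring
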